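/- For every integer k ≥ 0, every square Q_k in ℤ² of side length 3^k, and every finite subgraph Γ of S whose vertices all lie in Q_k, one has cut^{1/2}(Γ) ≤ 12·2^k. -/

import Mathlib

open scoped Classical

/-- Reachability within the subgraph of `X` induced on a vertex set `s`. -/
def SimpleGraph.ReachIn {V : Type*} (X : SimpleGraph V) (s : Set V) (v w : V) : Prop :=
  ∃ (hv : v ∈ s) (hw : w ∈ s), (X.induce s).Reachable ⟨v, hv⟩ ⟨w, hw⟩

/-- The vertex set of the connected component of `v` in the subgraph of `X` induced on `s`
(empty if `v ∉ s`). -/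
def SimpleGraph.compIn {V : Type*} (X : SimpleGraph V) (s : Set V) (v : V) : Set V :=
  {w | X.ReachIn s v w}

/-- `T` is a vertex set witnessing `cut¹ᐟ²` for the subgraph of `X` induced on the finite
vertex set `G`: after removing `T` from `G`, every connected component has at most
`|G|/2` vertices. -/
def IsHalfCutSet {V : Type*} (X : SimpleGraph V) (G T : Finset V) : Prop :=
  T ⊆ G ∧ ∀ v : V, 2 * (X.compIn (↑(G \ T)) v).ncard ≤ G.card

/-- `cut¹ᐟ²` of the subgraph of `X` induced on the finite vertex set `G`: the least size of
a vertex set whose removal leaves all connected components of size at most `|G|/2`. -/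
noncomputable def cutHalf {V : Type*} (X : SimpleGraph V) (G : Finset V) : ℕ :=
  sInf {t | ∃ T : Finset V, IsHalfCutSet X G T ∧ T.card = t}

/-- The `1/2`-separation profile of `X`, over finite subgraphs with vertex set inside `W`. -/
noncomputable def sepHalf {V : Type*} (X : SimpleGraph V) (W : Set V) (n : ℕ) : ℕ :=
  sSup {c | ∃ G : Finset V, ↑G ⊆ W ∧ G.card ≤ n ∧ c = cutHalf X G}

/-- The `i`-th digit of `x` in base `b`. -/
def digit (b i x : ℕ) : ℕ := x / b ^ i % b

/-- Membership in the vertex set of the infinite Sierpinski graph: no position at which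
both coordinates have base-3 digit `1`. -/
def SierpMem (p : ℕ × ℕ) : Prop :=
  ∀ i : ℕ, ¬(digit 3 i p.1 = 1 ∧ digit 3 i p.2 = 1)

/-- The infinite Sierpinski graph `S`, with edges between valid points at `ℓ¹`-distance 1. -/
def SierpGraph : SimpleGraph (ℕ × ℕ) where
  Adj p q := SierpMem p ∧ SierpMem q ∧ |(p.1 : ℤ) - q.1| + |(p.2 : ℤ) - q.2| = 1
  symm := by
    constructor
    rintro p q ⟨hp, hq, h⟩
    exact ⟨hq, hp, by
      rw [abs_sub_comm (q.1 : ℤ) (p.1 : ℤ), abs_sub_comm (q.2 : ℤ) (p.2 : ℤ)]; exact h⟩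
  loopless := by constructor; rintro p ⟨-, -, h⟩; simp at h

/-- The vertex set of the sphere `Γ_k`. -/
noncomputable def GammaV (k : ℕ) : Finset (ℕ × ℕ) :=
  (Finset.range (3 ^ k) ×ˢ Finset.range (3 ^ k)).filter SierpMem

/-- The intersection of the vertical line `V_x` with `Γ_k`. -/
def VlineSet (k x : ℕ) : Set (ℕ × ℕ) := {p | p ∈ GammaV k ∧ p.1 = x}

/-- The intersection of the horizontal line `H_y` with `Γ_k`. -/
def HlineSet (k y : ℕ) : Set (ℕ × ℕ) := {p | p ∈ GammaV k ∧ p.2 = y}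

/-- The vertical line `V_x` is complete in `Γ_k`: its intersection with `Γ_k` is connected. -/
def CompleteV (k x : ℕ) : Prop := (SierpGraph.induce (VlineSet k x)).Connected

/-- The horizontal line `H_y` is complete in `Γ_k`: its intersection with `Γ_k` is connected. -/
def CompleteH (k y : ℕ) : Prop := (SierpGraph.induce (HlineSet k y)).Connected

/-- The vertex set of the complete-lines subgraph `C_k` of `Γ_k`. -/
noncomputable def CkV (k : ℕ) : Finset (ℕ × ℕ) :=
  (GammaV k).filter fun p => CompleteV k p.1 ∨ CompleteH k p.2

lemma digit_add_mul_pow {i j : ℕ} (x t : ℕ) (hij : i < j) :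
    digit 3 i (x + t * 3 ^ j) = digit 3 i x := by
  unfold digit
  have h1 : (3:ℕ) ^ j = 3 ^ i * 3 ^ (j - i) := by
    rw [← pow_add]; congr 1; omega
  have h2 : (x + t * 3 ^ j) / 3 ^ i = x / 3 ^ i + t * 3 ^ (j - i) := by
    rw [h1, show t * (3 ^ i * 3 ^ (j-i)) = 3 ^ i * (t * 3 ^ (j-i)) by ring,
      Nat.add_mul_div_left _ _ (by positivity)]
  rw [h2]
  have h3 : (3:ℕ) ^ (j - i) = 3 ^ (j - i - 1) * 3 := by
    rw [← pow_succ]; congr 1; omega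
  rw [h3, show x / 3 ^ i + t * (3 ^ (j-i-1) * 3) = x / 3 ^ i + t * 3 ^ (j-i-1) * 3 by ring,
    Nat.add_mul_mod_self_right]

lemma digit_mod_pow {i j : ℕ} (x : ℕ) (hij : i < j) :
    digit 3 i (x % 3 ^ j) = digit 3 i x := by
  conv_rhs => rw [← Nat.mod_add_div x (3 ^ j)]
  rw [show x % 3 ^ j + 3 ^ j * (x / 3 ^ j) = x % 3 ^ j + (x / 3 ^ j) * 3 ^ j by ring,
    digit_add_mul_pow _ _ hij]

lemma digit_zero (x : ℕ) : digit 3 0 x = x % 3 := by simp [digit]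

lemma digit_div3 (i x : ℕ) : digit 3 (i+1) x = digit 3 i (x / 3) := by
  unfold digit
  rw [Nat.div_div_eq_div_mul]
  congr 2
  rw [pow_succ]; ring

lemma digits_inj : ∀ (j x y : ℕ), x < 3 ^ j → y < 3 ^ j →
    (∀ i, i < j → digit 3 i x = digit 3 i y) → x = y := by
  intro j
  induction j with
  | zero => intro x y hx hy _; simp at hx hy; omega
  | succ j ih =>
    intro x y hx hy h
    have h0 := h 0 (Nat.succ_pos _)
    rw [digit_zero, digit_zero] at h0
    have hd : x / 3 = y / 3 := by
      apply ih
      · rw [Nat.div_lt_iff_lt_mul (by norm_num)]; rw [pow_succ] at hx; exact hx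
      · rw [Nat.div_lt_iff_lt_mul (by norm_num)]; rw [pow_succ] at hy; exact hy
      · intro i hi
        have := h (i+1) (by omega)
        rwa [digit_div3, digit_div3] at this
    omega

def rnum (j : ℕ) : ℕ := ∑ i ∈ Finset.range j, 3 ^ i

lemma rnum_lt (j : ℕ) : rnum j < 3 ^ j := by
  induction j with
  | zero => simp [rnum]
  | succ j ih =>
    rw [rnum, Finset.sum_range_succ, ← rnum, pow_succ]
    have : 0 < 3 ^ j := by positivity
    omega

lemma digit_rnum {i j : ℕ} (hij : i < j) : digit 3 i (rnum j) = 1 := by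
  induction j with
  | zero => omega
  | succ j ih =>
    rw [rnum, Finset.sum_range_succ, ← rnum]
    rcases Nat.lt_or_ge i j with h | h
    · rw [show rnum j + 3 ^ j = rnum j + 1 * 3 ^ j by ring, digit_add_mul_pow _ _ h]
      exact ih h
    · have hij' : i = j := by omega
      subst hij'
      unfold digit
      rw [Nat.add_div_of_dvd_left ⟨1, by ring⟩]
      rw [Nat.div_eq_of_lt (rnum_lt _), Nat.div_self (by positivity)]
lemma compIn_subset {V : Type*} (X : SimpleGraph V) (s : Set V) (v : V) :
    X.compIn s v ⊆ s := fun w hw => hw.2.1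

lemma compIn_of_not_mem {V : Type*} (X : SimpleGraph V) (s : Set V) (v : V) (hv : v ∉ s) :
    X.compIn s v = ∅ := by
  ext w
  simp only [SimpleGraph.compIn, SimpleGraph.ReachIn, Set.mem_setOf_eq, Set.mem_empty_iff_false,
    iff_false]
  rintro ⟨h, -, -⟩
  exact hv h

lemma compIn_subset_inter {V : Type*} (X : SimpleGraph V) (s P : Set V)
    (hcl : ∀ p q, p ∈ s → q ∈ s → X.Adj p q → p ∈ P → q ∈ P)
    (v : V) (hv : v ∈ P) : X.compIn s v ⊆ X.compIn (s ∩ P) v := by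
  intro w hw
  obtain ⟨hvs, hws, hr⟩ := hw
  obtain ⟨wk⟩ := hr
  have H : ∀ (a b : s) (_ : (X.induce s).Walk a b), (a : V) ∈ P →
      X.ReachIn (s ∩ P) (a : V) (b : V) := by
    intro a b wk
    induction wk with
    | nil => intro haP; exact ⟨⟨Subtype.coe_prop _, haP⟩, ⟨Subtype.coe_prop _, haP⟩, SimpleGraph.Reachable.refl _⟩
    | @cons u v' w' hadj tail ih =>
      intro huP
      have hXadj : X.Adj (u : V) (v' : V) := hadj
      have hv'P : (v' : V) ∈ P := hcl u v' u.2 v'.2 hXadj huP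
      obtain ⟨h1, h2, hr2⟩ := ih hv'P
      refine ⟨⟨u.2, huP⟩, h2, ?_⟩
      refine SimpleGraph.Reachable.trans ?_ hr2
      exact SimpleGraph.Adj.reachable (by exact hXadj)
  exact H ⟨v, hvs⟩ ⟨w, hws⟩ wk hv

lemma ncard_le_of_subset_finset {V : Type*} (s : Set V) (Fs : Finset V)
    (h : s ⊆ ↑Fs) : s.ncard ≤ Fs.card := by
  have := Set.ncard_le_ncard h Fs.finite_toSet
  rwa [Set.ncard_coe_finset] at this

lemma adj_cases (p q : ℕ × ℕ) (h : SierpGraph.Adj p q) :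
    (p.2 = q.2 ∧ (p.1 = q.1 + 1 ∨ q.1 = p.1 + 1)) ∨
      (p.1 = q.1 ∧ (p.2 = q.2 + 1 ∨ q.2 = p.2 + 1)) := by
  obtain ⟨-, -, habs⟩ := h
  rcases abs_cases ((p.1 : ℤ) - q.1) with ⟨e1, f1⟩ | ⟨e1, f1⟩ <;>
    rcases abs_cases ((p.2 : ℤ) - q.2) with ⟨e2, f2⟩ | ⟨e2, f2⟩ <;>
      rw [e1, e2] at habs <;> omega

lemma line_count (j : ℕ) (π σ : ℕ × ℕ → ℕ)
    (hps : ∀ p q : ℕ × ℕ, π p = π q → σ p = σ q → p = q)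
    (F : Finset (ℕ × ℕ)) (C h c : ℕ)
    (hdigF : ∀ p ∈ F, ∀ i : ℕ, ¬(digit 3 i (π p) = 1 ∧ digit 3 i (σ p) = 1))
    (hboxσ : ∀ p ∈ F, C ≤ σ p ∧ σ p ≤ C + h)
    (hc : c % 3 ^ j = rnum j) :
    (F.filter (fun p => π p = c)).card ≤ ((h + 3 ^ j - 1) / 3 ^ j + 1) * 2 ^ j := by
  classical
  set m := 3 ^ j with hm
  have hm0 : 0 < m := by positivity
  -- every point on the line has digits of σ p below j different from 1
  have hdig : ∀ p ∈ F, π p = c → ∀ i, i < j → digit 3 i (σ p) ≠ 1 := by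
    intro p hp hpc i hij h1
    have hci : digit 3 i c = 1 := by
      rw [← digit_mod_pow c hij, hc]; exact digit_rnum hij
    exact hdigF p hp i ⟨by rw [hpc]; exact hci, h1⟩
  -- injection
  have hcard : ((h + m - 1) / m + 1) * 2 ^ j =
      ((Finset.range ((h + m - 1) / m + 1)) ×ˢ (Finset.univ : Finset (Fin j → Bool))).card := by
    rw [Finset.card_product, Finset.card_range, Finset.card_univ]
    simp
  rw [hcard]
  apply Finset.card_le_card_of_injOn
    (fun p => ((σ p - m * (C / m)) / m, fun i : Fin j => decide (digit 3 (i : ℕ) (σ p) = 2)))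
  · intro p hp
    simp only [Finset.mem_coe, Finset.mem_filter] at hp
    obtain ⟨hpF, hpc⟩ := hp
    obtain ⟨h1, h2⟩ := hboxσ p hpF
    simp only [Finset.mem_coe, Finset.mem_product, Finset.mem_range, Finset.mem_univ, and_true]
    have hCm : m * (C / m) ≤ C := Nat.mul_div_le C m
    have : σ p - m * (C / m) ≤ h + m - 1 := by
      have hCmod : C - m * (C / m) = C % m := by
        rw [Nat.mod_def]
      have : C % m < m := Nat.mod_lt _ hm0
      omega
    calc (σ p - m * (C / m)) / m ≤ (h + m - 1) / m := Nat.div_le_div_right this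
      _ < (h + m - 1) / m + 1 := Nat.lt_succ_self _
  · intro p hp q hq heq
    simp only [Finset.mem_coe, Finset.mem_filter] at hp hq
    obtain ⟨hpF, hpc⟩ := hp
    obtain ⟨hqF, hqc⟩ := hq
    simp only [Prod.mk.injEq] at heq
    obtain ⟨hquot, hbits⟩ := heq
    -- recover σ p % m
    have hmodeq : σ p % m = σ q % m := by
      apply digits_inj j _ _ (Nat.mod_lt _ hm0) (Nat.mod_lt _ hm0)
      intro i hij
      rw [digit_mod_pow _ hij, digit_mod_pow _ hij]
      have hbp := congrFun hbits ⟨i, hij⟩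
      simp only [decide_eq_decide] at hbp
      have d1 : digit 3 i (σ p) < 3 := Nat.mod_lt _ (by norm_num)
      have d2 : digit 3 i (σ q) < 3 := Nat.mod_lt _ (by norm_num)
      have n1 : digit 3 i (σ p) ≠ 1 := hdig p hpF hpc i hij
      have n2 : digit 3 i (σ q) ≠ 1 := hdig q hqF hqc i hij
      omega
    have key : ∀ x : ℕ, m * (C / m) ≤ x →
        x = m * (C / m) + m * ((x - m * (C / m)) / m) + x % m := by
      intro x hx
      have h1 : (x - m * (C / m)) % m = x % m := by
        conv_rhs => rw [← Nat.sub_add_cancel hx]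
        rw [Nat.add_mul_mod_self_left]
      have h2 := Nat.div_add_mod (x - m * (C / m)) m
      omega
    have hCm : m * (C / m) ≤ C := Nat.mul_div_le C m
    have hσ : σ p = σ q := by
      have ep := key (σ p) (le_trans hCm (hboxσ p hpF).1)
      have eq' := key (σ q) (le_trans hCm (hboxσ q hqF).1)
      rw [ep, eq', hquot, hmodeq]
    exact hps p q (by rw [hpc, hqc]) hσ

lemma vstep (j : ℕ) (π σ : ℕ × ℕ → ℕ)
    (hps : ∀ p q : ℕ × ℕ, π p = π q → σ p = σ q → p = q)
    (hadj : ∀ p q : ℕ × ℕ, SierpGraph.Adj p q →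
      (σ p = σ q ∧ (π p = π q + 1 ∨ π q = π p + 1)) ∨
        (π p = π q ∧ (σ p = σ q + 1 ∨ σ q = σ p + 1)))
    (F : Finset (ℕ × ℕ)) (n A C w h : ℕ)
    (hdigF : ∀ p ∈ F, ∀ i : ℕ, ¬(digit 3 i (π p) = 1 ∧ digit 3 i (σ p) = 1))
    (hbox : ∀ p ∈ F, A ≤ π p ∧ π p ≤ A + w ∧ C ≤ σ p ∧ σ p ≤ C + h)
    (hFn : F.card ≤ n) :
    ∃ (L : Finset (ℕ × ℕ)) (A' w' : ℕ), L ⊆ F ∧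
      L.card ≤ 2 * (((h + 3 ^ j - 1) / 3 ^ j + 1) * 2 ^ j) ∧ w' + 1 ≤ 3 ^ j ∧
      (∀ p ∈ F, p ∉ L → A' ≤ π p → π p ≤ A' + w' →
        ∀ q ∈ F, q ∉ L → SierpGraph.Adj p q → A' ≤ π q ∧ π q ≤ A' + w') ∧
      (∀ p ∈ F, p ∉ L → (A' ≤ π p ∧ π p ≤ A' + w') ∨
        ∃ P : Set (ℕ × ℕ), p ∈ P ∧
          (∀ u ∈ F, u ∉ L → u ∈ P → ∀ v ∈ F, v ∉ L → SierpGraph.Adj u v → v ∈ P) ∧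
          2 * ((↑F : Set (ℕ × ℕ)) ∩ P).ncard ≤ n) := by
  classical
  set m := 3 ^ j with hmdef
  have hm0 : 0 < m := by positivity
  by_cases hsmall : w + 1 ≤ m
  · refine ⟨∅, A, w, Finset.empty_subset _, by simp, hsmall, ?_, ?_⟩
    · intro p _ _ _ _ q hq _ _
      exact ⟨(hbox q hq).1, (hbox q hq).2.1⟩
    · intro p hp _
      left; exact ⟨(hbox p hp).1, (hbox p hp).2.1⟩
  · push_neg at hsmall
    have lc : ∀ c : ℕ, c % m = rnum j →
        (F.filter (fun p => π p = c)).card ≤ ((h + m - 1) / m + 1) * 2 ^ j :=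
      fun c hc => line_count j π σ hps F C h c hdigF
        (fun p hp => ⟨(hbox p hp).2.2.1, (hbox p hp).2.2.2⟩) hc
    set μ : ℕ → ℕ := fun x => (F.filter (fun p => π p < x)).card with hμ
    have masssplit : ∀ x, μ x + (F.filter (fun p => x < π p)).card ≤ F.card := by
      intro x
      have hdisj : Disjoint (F.filter (fun p => π p < x)) (F.filter (fun p => x < π p)) := by
        simp only [Finset.disjoint_left, Finset.mem_filter]
        rintro a ⟨-, h1⟩ ⟨-, h2⟩; omega
      calc μ x + (F.filter (fun p => x < π p)).card
          = ((F.filter (fun p => π p < x)) ∪ (F.filter (fun p => x < π p))).card :=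
            (Finset.card_union_of_disjoint hdisj).symm
        _ ≤ F.card := Finset.card_le_card
            (Finset.union_subset (Finset.filter_subset _ _) (Finset.filter_subset _ _))
    -- generic light pieces
    have mkLt : ∀ (L : Finset (ℕ × ℕ)) (x0 : ℕ), (∀ p ∈ F, π p = x0 → p ∈ L) →
        2 * μ x0 ≤ n → ∀ p : ℕ × ℕ, π p < x0 →
        ∃ P : Set (ℕ × ℕ), p ∈ P ∧
          (∀ u ∈ F, u ∉ L → u ∈ P → ∀ v ∈ F, v ∉ L → SierpGraph.Adj u v → v ∈ P) ∧
          2 * ((↑F : Set (ℕ × ℕ)) ∩ P).ncard ≤ n := by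
      intro L x0 hline hmass p hp
      refine ⟨{u | π u < x0}, hp, ?_, ?_⟩
      · intro u _ _ huP v hv hvl hadj'
        have hne : π v ≠ x0 := fun hx => hvl (hline v hv hx)
        have hcase := hadj u v hadj'
        simp only [Set.mem_setOf_eq] at huP ⊢
        rcases hcase with ⟨-, h1 | h1⟩ | ⟨h1, -⟩ <;> omega
      · have he : ((↑F : Set (ℕ × ℕ)) ∩ {u | π u < x0}) =
            ↑(F.filter (fun p => π p < x0)) := by
          ext x; simp
        rw [he, Set.ncard_coe_finset]; exact hmass
    have mkGt : ∀ (L : Finset (ℕ × ℕ)) (x0 : ℕ), (∀ p ∈ F, π p = x0 → p ∈ L) →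
        n + 1 ≤ 2 * μ x0 → ∀ p : ℕ × ℕ, x0 < π p →
        ∃ P : Set (ℕ × ℕ), p ∈ P ∧
          (∀ u ∈ F, u ∉ L → u ∈ P → ∀ v ∈ F, v ∉ L → SierpGraph.Adj u v → v ∈ P) ∧
          2 * ((↑F : Set (ℕ × ℕ)) ∩ P).ncard ≤ n := by
      intro L x0 hline hmass p hp
      refine ⟨{u | x0 < π u}, hp, ?_, ?_⟩
      · intro u _ _ huP v hv hvl hadj'
        have hne : π v ≠ x0 := fun hx => hvl (hline v hv hx)
        have hcase := hadj u v hadj'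
        simp only [Set.mem_setOf_eq] at huP ⊢
        rcases hcase with ⟨-, h1 | h1⟩ | ⟨h1, -⟩ <;> omega
      · have he : ((↑F : Set (ℕ × ℕ)) ∩ {u | x0 < π u}) =
            ↑(F.filter (fun p => x0 < π p)) := by
          ext x; simp
        rw [he, Set.ncard_coe_finset]
        have h1 := masssplit x0
        omega
    -- cheap positions
    set CH := (Finset.Icc A (A + w)).filter (fun x => x % m = rnum j) with hCH
    have hrlt : rnum j < m := rnum_lt j
    set c0 := A + (m + rnum j - A % m) % m with hc0def
    have hAm : A % m < m := Nat.mod_lt _ hm0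
    have hc0r : c0 % m = rnum j := by
      have hdm := Nat.div_add_mod A m
      have h2 : c0 % m = ((m + rnum j - A % m) % m + A) % m := by
        rw [hc0def, Nat.add_comm]
      have h3 : ((m + rnum j - A % m) % m + A) % m = ((m + rnum j - A % m) + A) % m :=
        Nat.mod_add_mod _ _ _
      have e1 : (A / m + 1) * m = m * (A / m) + m := by ring
      have h4 : m + rnum j - A % m + A = rnum j + (A / m + 1) * m := by omega
      rw [h2, h3, h4, Nat.add_mul_mod_self_right, Nat.mod_eq_of_lt hrlt]
    have hc0le : c0 ≤ A + m - 1 := by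
      have : (m + rnum j - A % m) % m < m := Nat.mod_lt _ hm0
      omega
    have hc0CH : c0 ∈ CH := by
      rw [hCH]
      simp only [Finset.mem_filter, Finset.mem_Icc]
      exact ⟨⟨by omega, by omega⟩, hc0r⟩
    set B := CH.filter (fun x => 2 * μ x ≤ n) with hB
    by_cases hBne : B.Nonempty
    · -- there is a balanced cheap line p1
      set p1 := B.max' hBne with hp1def
      have hp1B : p1 ∈ B := B.max'_mem hBne
      have hp1CH : p1 ∈ CH := (Finset.mem_filter.1 hp1B).1
      have hp1mass : 2 * μ p1 ≤ n := (Finset.mem_filter.1 hp1B).2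
      have hp1r : p1 % m = rnum j := (Finset.mem_filter.1 hp1CH).2
      have hp1Icc : A ≤ p1 ∧ p1 ≤ A + w := by
        have := (Finset.mem_filter.1 hp1CH).1
        simpa using this
      by_cases hp2ex : p1 + m ≤ A + w
      · -- two cuts at p1 and p2 = p1 + m
        set p2 := p1 + m with hp2def
        have hp2CH : p2 ∈ CH := by
          rw [hCH]
          simp only [Finset.mem_filter, Finset.mem_Icc]
          refine ⟨⟨by omega, by omega⟩, ?_⟩
          rw [hp2def, Nat.add_mod_right]; exact hp1r
        have hp2notB : ¬(2 * μ p2 ≤ n) := by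
          intro hx
          have := Finset.le_max' B p2 (Finset.mem_filter.2 ⟨hp2CH, hx⟩)
          rw [← hp1def] at this
          omega
        refine ⟨F.filter (fun p => π p = p1 ∨ π p = p2), p1 + 1, m - 2,
          Finset.filter_subset _ _, ?_, by omega, ?_, ?_⟩
        · have hsub : F.filter (fun p => π p = p1 ∨ π p = p2) ⊆
              F.filter (fun p => π p = p1) ∪ F.filter (fun p => π p = p2) := by
            intro x hx
            simp only [Finset.mem_filter, Finset.mem_union] at hx ⊢
            tauto
          have h1 := lc p1 hp1r
          have h2 := lc p2 ((Finset.mem_filter.1 hp2CH).2)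
          have h3 := Finset.card_le_card hsub
          have h4 := Finset.card_union_le (F.filter (fun p => π p = p1))
            (F.filter (fun p => π p = p2))
          omega
        · intro p hp hpl hp1' hp2' q hq hql hadj'
          have hpc : ¬(π p = p1 ∨ π p = p2) := fun hx => hpl (Finset.mem_filter.2 ⟨hp, hx⟩)
          have hqc : ¬(π q = p1 ∨ π q = p2) := fun hx => hql (Finset.mem_filter.2 ⟨hq, hx⟩)
          have hcase := hadj p q hadj'
          push_neg at hpc hqc
          rcases hcase with ⟨-, h1 | h1⟩ | ⟨h1, -⟩ <;> omega
        · intro p hp hpl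
          have hpc : ¬(π p = p1 ∨ π p = p2) := fun hx => hpl (Finset.mem_filter.2 ⟨hp, hx⟩)
          push_neg at hpc
          rcases Nat.lt_or_ge (π p) p1 with hlt | hge
          · right
            exact mkLt _ p1 (fun u hu hx => Finset.mem_filter.2 ⟨hu, Or.inl hx⟩) hp1mass p hlt
          · rcases Nat.lt_or_ge p2 (π p) with hgt | hle2
            · right
              exact mkGt _ p2 (fun u hu hx => Finset.mem_filter.2 ⟨hu, Or.inr hx⟩)
                (by omega) p hgt
            · left; omega
      · -- p1 is the last cheap position: single cut at p1
        refine ⟨F.filter (fun p => π p = p1), p1 + 1, A + w - p1 - 1,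
          Finset.filter_subset _ _, ?_, by omega, ?_, ?_⟩
        · have h1 := lc p1 hp1r
          omega
        · intro p hp hpl hp1' hp2' q hq hql hadj'
          have hpc : π p ≠ p1 := fun hx => hpl (Finset.mem_filter.2 ⟨hp, hx⟩)
          have hqc : π q ≠ p1 := fun hx => hql (Finset.mem_filter.2 ⟨hq, hx⟩)
          have hcase := hadj p q hadj'
          have hqb := hbox q hq
          rcases hcase with ⟨-, h1 | h1⟩ | ⟨h1, -⟩ <;> omega
        · intro p hp hpl
          have hpc : π p ≠ p1 := fun hx => hpl (Finset.mem_filter.2 ⟨hp, hx⟩)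
          rcases Nat.lt_or_ge (π p) p1 with hlt | hge
          · right
            exact mkLt _ p1 (fun u hu hx => Finset.mem_filter.2 ⟨hu, hx⟩) hp1mass p hlt
          · left
            have := (hbox p hp).2.1
            omega
    · -- no balanced cheap line: single cut at c0
      have hc0notB : ¬(2 * μ c0 ≤ n) := by
        intro hx
        exact hBne ⟨c0, Finset.mem_filter.2 ⟨hc0CH, hx⟩⟩
      refine ⟨F.filter (fun p => π p = c0), A, c0 - A - 1,
        Finset.filter_subset _ _, ?_, by omega, ?_, ?_⟩
      · have h1 := lc c0 hc0r
        omega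
      · intro p hp hpl hp1' hp2' q hq hql hadj'
        have hpc : π p ≠ c0 := fun hx => hpl (Finset.mem_filter.2 ⟨hp, hx⟩)
        have hqc : π q ≠ c0 := fun hx => hql (Finset.mem_filter.2 ⟨hq, hx⟩)
        have hcase := hadj p q hadj'
        have hqb := hbox q hq
        rcases hcase with ⟨-, h1 | h1⟩ | ⟨h1, -⟩ <;> omega
      · intro p hp hpl
        have hpc : π p ≠ c0 := fun hx => hpl (Finset.mem_filter.2 ⟨hp, hx⟩)
        rcases Nat.lt_or_ge (π p) c0 with hlt | hge
        · left
          have := (hbox p hp).1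
          omega
        · right
          exact mkGt _ c0 (fun u hu hx => Finset.mem_filter.2 ⟨hu, hx⟩) (by omega) p (by omega)

lemma main_cut (j : ℕ) : ∀ (A C w h : ℕ) (F : Finset (ℕ × ℕ)) (n : ℕ),
    (∀ p ∈ F, SierpMem p) →
    (∀ p ∈ F, A ≤ p.1 ∧ p.1 ≤ A + w ∧ C ≤ p.2 ∧ p.2 ≤ C + h) →
    F.card ≤ n → w ≤ 3 ^ j → h ≤ 3 ^ j →
    ∃ T : Finset (ℕ × ℕ), T ⊆ F ∧ T.card ≤ 12 * 2 ^ j - 8 ∧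
      ∀ v : ℕ × ℕ, 2 * (SierpGraph.compIn (↑(F \ T)) v).ncard ≤ n := by
  induction j with
  | zero =>
    intro A C w h F n hmem hbox hFn hw hh
    by_cases hlight : 2 * F.card ≤ n
    · refine ⟨∅, Finset.empty_subset _, by simp, ?_⟩
      intro v
      rw [Finset.sdiff_empty]
      have h1 : (SierpGraph.compIn (↑F) v).ncard ≤ F.card :=
        ncard_le_of_subset_finset _ _ (compIn_subset _ _ _)
      omega
    · refine ⟨F, Finset.Subset.refl _, ?_, ?_⟩
      · have hsub : F ⊆ (Finset.Icc A (A + w)) ×ˢ (Finset.Icc C (C + h)) := by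
          intro p hp
          obtain ⟨h1, h2, h3, h4⟩ := hbox p hp
          simp only [Finset.mem_product, Finset.mem_Icc]
          exact ⟨⟨h1, h2⟩, ⟨h3, h4⟩⟩
        have h1 := Finset.card_le_card hsub
        rw [Finset.card_product, Nat.card_Icc, Nat.card_Icc] at h1
        simp only [pow_zero] at hw hh ⊢
        have : F.card ≤ (w + 1) * (h + 1) := by
          calc F.card ≤ (A + w + 1 - A) * (C + h + 1 - C) := h1
            _ = (w + 1) * (h + 1) := by congr 1 <;> omega
        interval_cases w <;> interval_cases h <;> omega
      · intro v
        rw [Finset.sdiff_self]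
        rw [compIn_of_not_mem _ _ _ (by simp)]
        simp
  | succ j IH =>
    intro A C w h F n hmem hbox hFn hw hh
    by_cases hlight : 2 * F.card ≤ n
    · refine ⟨∅, Finset.empty_subset _, by simp, ?_⟩
      intro v
      rw [Finset.sdiff_empty]
      have h1 : (SierpGraph.compIn (↑F) v).ncard ≤ F.card :=
        ncard_le_of_subset_finset _ _ (compIn_subset _ _ _)
      omega
    · have hm0 : 0 < (3:ℕ) ^ j := by positivity
      have h2j : 0 < (2:ℕ) ^ j := by positivity
      have hpow3 : (3:ℕ) ^ (j + 1) = 3 * 3 ^ j := by rw [pow_succ]; ring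
      have hpow2 : (2:ℕ) ^ (j + 1) = 2 * 2 ^ j := by rw [pow_succ]; ring
      -- vertical step
      obtain ⟨Lv, A', w', hLvF, hLvcard, hw', hP2v, hP1v⟩ :=
        vstep j Prod.fst Prod.snd (fun p q h1 h2 => Prod.ext h1 h2)
          (fun p q hA => adj_cases p q hA) F n A C w h
          (fun p hp => hmem p hp) hbox hFn
      set F1 := (F \ Lv).filter (fun p => A' ≤ p.1 ∧ p.1 ≤ A' + w') with hF1
      have hF1sub : F1 ⊆ F := (Finset.filter_subset _ _).trans (Finset.sdiff_subset)
      have hF1mem : ∀ p, p ∈ F1 ↔ p ∈ F ∧ p ∉ Lv ∧ (A' ≤ p.1 ∧ p.1 ≤ A' + w') := by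
        intro p
        simp [hF1, Finset.mem_filter, Finset.mem_sdiff, and_assoc]
      -- horizontal step
      obtain ⟨Lh, C', h', hLhF, hLhcard, hh', hP2h, hP1h⟩ :=
        vstep j Prod.snd Prod.fst (fun p q h1 h2 => Prod.ext h2 h1)
          (fun p q hA => Or.symm (adj_cases p q hA)) F1 n C A' h w'
          (fun p hp i hcontra => hmem p (hF1sub hp) i ⟨hcontra.2, hcontra.1⟩)
          (fun p hp => ⟨(hbox p (hF1sub hp)).2.2.1, (hbox p (hF1sub hp)).2.2.2,
            ((hF1mem p).1 hp).2.2.1, ((hF1mem p).1 hp).2.2.2⟩)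
          (le_trans (Finset.card_le_card hF1sub) hFn)
      set F3 := (F1 \ Lh).filter (fun p => C' ≤ p.2 ∧ p.2 ≤ C' + h') with hF3
      have hF3sub : F3 ⊆ F1 := (Finset.filter_subset _ _).trans (Finset.sdiff_subset)
      have hF3mem : ∀ p, p ∈ F3 ↔ p ∈ F1 ∧ p ∉ Lh ∧ (C' ≤ p.2 ∧ p.2 ≤ C' + h') := by
        intro p
        simp [hF3, Finset.mem_filter, Finset.mem_sdiff, and_assoc]
      -- recursive step
      obtain ⟨Tr, hTrF3, hTrcard, hTrcomp⟩ :=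
        IH A' C' w' h' F3 n
          (fun p hp => hmem p (hF1sub (hF3sub hp)))
          (fun p hp => ⟨((hF1mem p).1 (hF3sub hp)).2.2.1, ((hF1mem p).1 (hF3sub hp)).2.2.2,
            ((hF3mem p).1 hp).2.2.1, ((hF3mem p).1 hp).2.2.2⟩)
          (le_trans (Finset.card_le_card (hF3sub.trans hF1sub)) hFn)
          (by omega) (by omega)
      refine ⟨Lv ∪ Lh ∪ Tr, ?_, ?_, ?_⟩
      · refine Finset.union_subset (Finset.union_subset hLvF ?_) ?_
        · exact hLhF.trans hF1sub
        · exact hTrF3.trans (hF3sub.trans hF1sub)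
      · -- cardinality
        have hc1 := Finset.card_union_le (Lv ∪ Lh) Tr
        have hc2 := Finset.card_union_le Lv Lh
        have d1 : (h + 3 ^ j - 1) / 3 ^ j ≤ 3 := by
          apply Nat.le_of_lt_succ
          rw [Nat.div_lt_iff_lt_mul hm0]
          omega
        have d2 : (w' + 3 ^ j - 1) / 3 ^ j ≤ 1 := by
          apply Nat.le_of_lt_succ
          rw [Nat.div_lt_iff_lt_mul hm0]
          omega
        have b1 : ((h + 3 ^ j - 1) / 3 ^ j + 1) * 2 ^ j ≤ 4 * 2 ^ j :=
          Nat.mul_le_mul_right _ (by omega)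
        have b2 : ((w' + 3 ^ j - 1) / 3 ^ j + 1) * 2 ^ j ≤ 2 * 2 ^ j :=
          Nat.mul_le_mul_right _ (by omega)
        omega
      · -- the component bound
        intro v
        set s := (↑(F \ (Lv ∪ Lh ∪ Tr)) : Set (ℕ × ℕ)) with hs
        have hsmem : ∀ u : ℕ × ℕ, u ∈ s ↔ u ∈ F ∧ u ∉ Lv ∧ u ∉ Lh ∧ u ∉ Tr := by
          intro u
          simp [hs, Finset.mem_sdiff, Finset.mem_union, not_or, and_assoc]
        by_cases hvs : v ∈ s
        swap
        · rw [compIn_of_not_mem _ _ _ hvs]; simp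
        · obtain ⟨hvF, hvLv, hvLh, hvTr⟩ := (hsmem v).1 hvs
          by_cases hx : A' ≤ v.1 ∧ v.1 ≤ A' + w'
          · have hvF1 : v ∈ F1 := (hF1mem v).2 ⟨hvF, hvLv, hx⟩
            by_cases hy : C' ≤ v.2 ∧ v.2 ≤ C' + h'
            · -- cell case: recursion
              set cell := {u : ℕ × ℕ | (A' ≤ u.1 ∧ u.1 ≤ A' + w') ∧
                (C' ≤ u.2 ∧ u.2 ≤ C' + h')} with hcell
              have hcl : ∀ p q, p ∈ s → q ∈ s → SierpGraph.Adj p q → p ∈ cell → q ∈ cell := by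
                intro p q hps hqs hA hpc
                obtain ⟨hpF, hpLv, hpLh, hpTr⟩ := (hsmem p).1 hps
                obtain ⟨hqF, hqLv, hqLh, hqTr⟩ := (hsmem q).1 hqs
                simp only [hcell, Set.mem_setOf_eq] at hpc ⊢
                have hqx := hP2v p hpF hpLv hpc.1.1 hpc.1.2 q hqF hqLv hA
                have hpF1 : p ∈ F1 := (hF1mem p).2 ⟨hpF, hpLv, hpc.1⟩
                have hqF1 : q ∈ F1 := (hF1mem q).2 ⟨hqF, hqLv, hqx⟩
                have hqy := hP2h p hpF1 hpLh hpc.2.1 hpc.2.2 q hqF1 hqLh hA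
                exact ⟨hqx, hqy⟩
              have hsub := compIn_subset_inter SierpGraph s cell hcl v ⟨hx, hy⟩
              have hseq : s ∩ cell = (↑(F3 \ Tr) : Set (ℕ × ℕ)) := by
                ext u
                simp only [Set.mem_inter_iff, hsmem u, hcell, Set.mem_setOf_eq,
                  Finset.coe_sdiff, Set.mem_diff, Finset.mem_coe, hF3mem u, hF1mem u]
                tauto
              rw [hseq] at hsub
              have h1 : (SierpGraph.compIn s v).ncard ≤
                  (SierpGraph.compIn (↑(F3 \ Tr)) v).ncard :=
                Set.ncard_le_ncard hsub
                  (Set.Finite.subset (F3 \ Tr).finite_toSet (compIn_subset _ _ _))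
              have h2 := hTrcomp v
              omega
            · -- horizontal light piece
              have hor := hP1h v hvF1 hvLh
              rcases hor with hrange | ⟨P, hvP, hPcl, hPmass⟩
              · exact absurd hrange hy
              · set Pt := P ∩ {u : ℕ × ℕ | A' ≤ u.1 ∧ u.1 ≤ A' + w'} with hPt
                have hcl : ∀ p q, p ∈ s → q ∈ s → SierpGraph.Adj p q → p ∈ Pt → q ∈ Pt := by
                  intro p q hps hqs hA hpc
                  obtain ⟨hpF, hpLv, hpLh, hpTr⟩ := (hsmem p).1 hps
                  obtain ⟨hqF, hqLv, hqLh, hqTr⟩ := (hsmem q).1 hqs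
                  simp only [hPt, Set.mem_inter_iff, Set.mem_setOf_eq] at hpc ⊢
                  have hqx := hP2v p hpF hpLv hpc.2.1 hpc.2.2 q hqF hqLv hA
                  have hpF1 : p ∈ F1 := (hF1mem p).2 ⟨hpF, hpLv, hpc.2⟩
                  have hqF1 : q ∈ F1 := (hF1mem q).2 ⟨hqF, hqLv, hqx⟩
                  exact ⟨hPcl p hpF1 hpLh hpc.1 q hqF1 hqLh hA, hqx⟩
                have hsub := compIn_subset_inter SierpGraph s Pt hcl v ⟨hvP, hx⟩
                have hsub2 : SierpGraph.compIn s v ⊆ (↑F1 : Set (ℕ × ℕ)) ∩ P := by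
                  intro u hu
                  have hu2 := hsub hu
                  have hu3 := compIn_subset SierpGraph (s ∩ Pt) v hu2
                  obtain ⟨hus, huPt⟩ := hu3
                  obtain ⟨huF, huLv, huLh, huTr⟩ := (hsmem u).1 hus
                  exact ⟨(hF1mem u).2 ⟨huF, huLv, huPt.2⟩, huPt.1⟩
                have h1 : (SierpGraph.compIn s v).ncard ≤ ((↑F1 : Set (ℕ × ℕ)) ∩ P).ncard :=
                  Set.ncard_le_ncard hsub2 (Set.Finite.inter_of_left F1.finite_toSet P)
                omega
          · -- vertical light piece
            have hor := hP1v v hvF hvLv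
            rcases hor with hrange | ⟨P, hvP, hPcl, hPmass⟩
            · exact absurd hrange hx
            · have hcl : ∀ p q, p ∈ s → q ∈ s → SierpGraph.Adj p q → p ∈ P → q ∈ P := by
                intro p q hps hqs hA hpc
                obtain ⟨hpF, hpLv, hpLh, hpTr⟩ := (hsmem p).1 hps
                obtain ⟨hqF, hqLv, hqLh, hqTr⟩ := (hsmem q).1 hqs
                exact hPcl p hpF hpLv hpc q hqF hqLv hA
              have hsub := compIn_subset_inter SierpGraph s P hcl v hvP
              have hsub2 : SierpGraph.compIn s v ⊆ (↑F : Set (ℕ × ℕ)) ∩ P := by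
                intro u hu
                have hu2 := hsub hu
                have hu3 := compIn_subset SierpGraph (s ∩ P) v hu2
                obtain ⟨hus, huP⟩ := hu3
                exact ⟨((hsmem u).1 hus).1, huP⟩
              have h1 : (SierpGraph.compIn s v).ncard ≤ ((↑F : Set (ℕ × ℕ)) ∩ P).ncard :=
                Set.ncard_le_ncard hsub2 (Set.Finite.inter_of_left F.finite_toSet P)
              omega

/-- Every finite subgraph of the infinite Sierpinski graph contained in a square of side
length `3^k` satisfies `cut¹ᐟ² ≤ 12·2^k`. -/
theorem square_cut (k : ℕ) (a c : ℤ) (G : Finset (ℕ × ℕ)) (hmem : ∀ p ∈ G, SierpMem p)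
    (hsq : ∀ p ∈ G, a ≤ (p.1 : ℤ) ∧ (p.1 : ℤ) ≤ a + 3 ^ k ∧
      c ≤ (p.2 : ℤ) ∧ (p.2 : ℤ) ≤ c + 3 ^ k) :
    cutHalf SierpGraph G ≤ 12 * 2 ^ k := by
  have hA : ∀ p ∈ G, a.toNat ≤ p.1 ∧ p.1 ≤ a.toNat + 3 ^ k ∧
      c.toNat ≤ p.2 ∧ p.2 ≤ c.toNat + 3 ^ k := by
    intro p hp
    obtain ⟨h1, h2, h3, h4⟩ := hsq p hp
    have hpow : ((3:ℤ)) ^ k = ((3 ^ k : ℕ) : ℤ) := by push_cast; ring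
    omega
  obtain ⟨T, hTG, hTcard, hTcomp⟩ :=
    main_cut k a.toNat c.toNat (3 ^ k) (3 ^ k) G G.card hmem hA le_rfl le_rfl le_rfl
  have hle : cutHalf SierpGraph G ≤ T.card := by
    refine Nat.sInf_le ⟨T, ⟨hTG, fun v => ?_⟩, rfl⟩
    convert hTcomp v using 4
    ext x
    simp [Finset.mem_sdiff]
  omega
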